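/- Let p ≥ 1 and H ∈ ⋀^pX be homogeneous of degree p. Then H is a blade (i.e. H = v₁∧⋯∧v_p for some vectors v_i, or H = 0) if and only if (F⌟H)∧H = 0 for every F ∈ ⋀^{p−1}X. -/

import Mathlib

open ExteriorAlgebra

set_option linter.unusedSectionVars false


open scoped RealInnerProductSpace

/-- The blade `v₁ ∧ ⋯ ∧ v_k` in the exterior algebra. -/
noncomputable def expBlade {X : Type*} [AddCommGroup X] [Module ℝ X] {k : ℕ}
    (v : Fin k → X) : ExteriorAlgebra ℝ X :=
  (List.ofFn fun i => ExteriorAlgebra.ι ℝ (v i)).prod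


section
variable {X : Type*} [NormedAddCommGroup X] [InnerProductSpace ℝ X]
    [FiniteDimensional ℝ X]
    (ginv : ExteriorAlgebra ℝ X →ₐ[ℝ] ExteriorAlgebra ℝ X)
    (hginv : ∀ v : X, ginv (ExteriorAlgebra.ι ℝ v) = - ExteriorAlgebra.ι ℝ v)
    (lc : X → ExteriorAlgebra ℝ X →ₗ[ℝ] ExteriorAlgebra ℝ X)
    (hlc_one : ∀ v : X, lc v 1 = 0)
    (hlc_vec : ∀ v w : X, lc v (ExteriorAlgebra.ι ℝ w) = algebraMap ℝ (ExteriorAlgebra ℝ X) ⟪v, w⟫)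
    (hlc_mul : ∀ (v : X) (M N : ExteriorAlgebra ℝ X),
      lc v (M * N) = lc v M * N + ginv M * lc v N)

include hlc_one in
lemma lc_algebraMap (v : X) (r : ℝ) : lc v (algebraMap ℝ _ r) = 0 := by
  rw [Algebra.algebraMap_eq_smul_one, map_smul, hlc_one, smul_zero]

include hginv hlc_vec hlc_mul in
lemma lc_iota_mul (v w : X) (M : ExteriorAlgebra ℝ X) :
    lc v (ι ℝ w * M) = ⟪v, w⟫ • M - ι ℝ w * lc v M := by
  rw [hlc_mul, hlc_vec, hginv, ← Algebra.smul_def, neg_mul, sub_eq_add_neg]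

lemma iota_swap (u w : X) : ι ℝ u * ι ℝ w = - (ι ℝ w * ι ℝ u) :=
  eq_neg_of_add_eq_zero_left (ι_add_mul_swap u w)

lemma mem_grade_zero {M : ExteriorAlgebra ℝ X} (hM : M ∈ ⋀[ℝ]^0 X) :
    ∃ r : ℝ, algebraMap ℝ _ r = M := by
  have hM' : M ∈ (LinearMap.range (ι ℝ (M := X))) ^ 0 := hM
  rw [pow_zero] at hM'
  exact Submodule.mem_one.mp hM'

lemma one_mem_grade_zero : (1 : ExteriorAlgebra ℝ X) ∈ ⋀[ℝ]^0 X := by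
  show (1 : ExteriorAlgebra ℝ X) ∈ (LinearMap.range (ι ℝ (M := X))) ^ 0
  rw [pow_zero]
  exact Submodule.mem_one.mpr ⟨1, map_one _⟩

lemma iota_mul_mem_grade {q : ℕ} {w : X} {M : ExteriorAlgebra ℝ X} (hM : M ∈ ⋀[ℝ]^q X) :
    ι ℝ w * M ∈ ⋀[ℝ]^(q+1) X := by
  have := Submodule.mul_mem_mul (LinearMap.mem_range_self (ι ℝ) w) hM
  rwa [← pow_succ'] at this

include hlc_one in
lemma lc_mem_zero (v : X) {M : ExteriorAlgebra ℝ X} (hM : M ∈ ⋀[ℝ]^0 X) : lc v M = 0 := by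
  obtain ⟨r, rfl⟩ := mem_grade_zero hM
  exact lc_algebraMap lc hlc_one v r

include hginv hlc_one hlc_vec hlc_mul in
lemma lc_grade (v : X) {q : ℕ} {M : ExteriorAlgebra ℝ X} (hM : M ∈ ⋀[ℝ]^q X) :
    lc v M ∈ ⋀[ℝ]^(q-1) X := by
  induction hM using Submodule.pow_induction_on_left' with
  | algebraMap r => rw [lc_algebraMap lc hlc_one]; exact Submodule.zero_mem _
  | add x y i hx hy ihx ihy => rw [map_add]; exact Submodule.add_mem _ ihx ihy
  | mem_mul m hm i x hx ih =>
    obtain ⟨w, rfl⟩ := hm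
    rw [lc_iota_mul ginv hginv lc hlc_vec hlc_mul]
    refine Submodule.sub_mem _ (Submodule.smul_mem _ _ ?_) ?_
    · show x ∈ ⋀[ℝ]^(i.succ - 1) X
      simpa using hx
    · rcases i with _ | j
      · rw [lc_mem_zero lc hlc_one v hx, mul_zero]
        exact Submodule.zero_mem _
      · show ι ℝ w * lc v x ∈ ⋀[ℝ]^(j+2-1) X
        have h2 : lc v x ∈ ⋀[ℝ]^(j+1-1) X := ih
        simp only [Nat.add_sub_cancel] at h2 ⊢
        exact iota_mul_mem_grade h2
end

-- continuing inside same section style; will merge later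
section
variable {X : Type*} [NormedAddCommGroup X] [InnerProductSpace ℝ X]
    [FiniteDimensional ℝ X]
    (ginv : ExteriorAlgebra ℝ X →ₐ[ℝ] ExteriorAlgebra ℝ X)
    (hginv : ∀ v : X, ginv (ExteriorAlgebra.ι ℝ v) = - ExteriorAlgebra.ι ℝ v)
    (lc : X → ExteriorAlgebra ℝ X →ₗ[ℝ] ExteriorAlgebra ℝ X)
    (hlc_one : ∀ v : X, lc v 1 = 0)
    (hlc_vec : ∀ v w : X, lc v (ExteriorAlgebra.ι ℝ w) = algebraMap ℝ (ExteriorAlgebra ℝ X) ⟪v, w⟫)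
    (hlc_mul : ∀ (v : X) (M N : ExteriorAlgebra ℝ X),
      lc v (M * N) = lc v M * N + ginv M * lc v N)
    (LC : ExteriorAlgebra ℝ X →ₗ[ℝ] ExteriorAlgebra ℝ X →ₗ[ℝ] ExteriorAlgebra ℝ X)
    (hLC_one : ∀ N : ExteriorAlgebra ℝ X, LC 1 N = N)
    (hLC_vec : ∀ (v : X) (N : ExteriorAlgebra ℝ X), LC (ExteriorAlgebra.ι ℝ v) N = lc v N)
    (hLC_mul : ∀ (v : X) (M N : ExteriorAlgebra ℝ X),
      LC (ExteriorAlgebra.ι ℝ v * M) N = LC M (lc v N))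

-- anticommutation of a vector across a homogeneous element
lemma comm_grade (u : X) {k : ℕ} {F : ExteriorAlgebra ℝ X} (hF : F ∈ ⋀[ℝ]^k X) :
    ι ℝ u * F = ((-1 : ℝ))^k • (F * ι ℝ u) := by
  induction hF using Submodule.pow_induction_on_left' with
  | algebraMap r => rw [pow_zero, one_smul, Algebra.commutes]
  | add x y i hx hy ihx ihy => rw [mul_add, add_mul, ihx, ihy, smul_add]
  | mem_mul m hm i x hx ih =>
    obtain ⟨w, rfl⟩ := hm
    calc ι ℝ u * (ι ℝ w * x) = (ι ℝ u * ι ℝ w) * x := by rw [mul_assoc]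
    _ = -(ι ℝ w * (ι ℝ u * x)) := by rw [iota_swap, neg_mul, mul_assoc]
    _ = -(ι ℝ w * (((-1:ℝ))^i • (x * ι ℝ u))) := by rw [ih]
    _ = ((-1:ℝ))^(i+1) • (ι ℝ w * x * ι ℝ u) := by
        rw [mul_smul_comm, ← mul_assoc, pow_succ, mul_comm (((-1:ℝ))^i) (-1), mul_smul,
          neg_one_smul]

include hLC_one in
lemma LC_algebraMap (r : ℝ) (N : ExteriorAlgebra ℝ X) :
    LC (algebraMap ℝ _ r) N = r • N := by
  rw [Algebra.algebraMap_eq_smul_one, map_smul, LinearMap.smul_apply, hLC_one]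

include hLC_one hLC_vec hLC_mul in
lemma LC_mul_assoc (M N P : ExteriorAlgebra ℝ X) :
    LC (M * N) P = LC N (LC M P) := by
  induction M using ExteriorAlgebra.induction generalizing N P with
  | algebraMap r =>
    rw [← Algebra.smul_def, map_smul, LinearMap.smul_apply,
      LC_algebraMap LC hLC_one, map_smul]
  | ι v => rw [hLC_mul, hLC_vec]
  | mul a b iha ihb =>
    rw [mul_assoc, iha, ihb, ← iha]
  | add a b iha ihb =>
    rw [add_mul, map_add, map_add, LinearMap.add_apply, LinearMap.add_apply, iha, ihb,
      map_add]

include ginv hginv hlc_one hlc_vec hlc_mul hLC_one hLC_vec hLC_mul in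
lemma LC_grade {k : ℕ} {F : ExteriorAlgebra ℝ X} (hF : F ∈ ⋀[ℝ]^k X) :
    ∀ {m : ℕ} {N : ExteriorAlgebra ℝ X}, N ∈ ⋀[ℝ]^m X → LC F N ∈ ⋀[ℝ]^(m-k) X := by
  induction hF using Submodule.pow_induction_on_left' with
  | algebraMap r =>
    intro m N hN
    rw [LC_algebraMap LC hLC_one]
    simpa using Submodule.smul_mem _ _ hN
  | add x y i hx hy ihx ihy =>
    intro m N hN
    rw [map_add, LinearMap.add_apply]
    exact Submodule.add_mem _ (ihx hN) (ihy hN)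
  | mem_mul f hf i x hx ih =>
    intro m N hN
    obtain ⟨w, rfl⟩ := hf
    rw [hLC_mul]
    have h1 : lc w N ∈ ⋀[ℝ]^(m-1) X := lc_grade ginv hginv lc hlc_one hlc_vec hlc_mul w hN
    have h2 := ih h1
    have : m - 1 - i = m - (i + 1) := by omega
    rwa [this] at h2
end

section
variable {X : Type*} [NormedAddCommGroup X] [InnerProductSpace ℝ X]
    [FiniteDimensional ℝ X]
    (ginv : ExteriorAlgebra ℝ X →ₐ[ℝ] ExteriorAlgebra ℝ X)
    (hginv : ∀ v : X, ginv (ExteriorAlgebra.ι ℝ v) = - ExteriorAlgebra.ι ℝ v)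
    (lc : X → ExteriorAlgebra ℝ X →ₗ[ℝ] ExteriorAlgebra ℝ X)
    (hlc_one : ∀ v : X, lc v 1 = 0)
    (hlc_vec : ∀ v w : X, lc v (ExteriorAlgebra.ι ℝ w) = algebraMap ℝ (ExteriorAlgebra ℝ X) ⟪v, w⟫)
    (hlc_mul : ∀ (v : X) (M N : ExteriorAlgebra ℝ X),
      lc v (M * N) = lc v M * N + ginv M * lc v N)
    (LC : ExteriorAlgebra ℝ X →ₗ[ℝ] ExteriorAlgebra ℝ X →ₗ[ℝ] ExteriorAlgebra ℝ X)
    (hLC_one : ∀ N : ExteriorAlgebra ℝ X, LC 1 N = N)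
    (hLC_vec : ∀ (v : X) (N : ExteriorAlgebra ℝ X), LC (ExteriorAlgebra.ι ℝ v) N = lc v N)
    (hLC_mul : ∀ (v : X) (M N : ExteriorAlgebra ℝ X),
      LC (ExteriorAlgebra.ι ℝ v * M) N = LC M (lc v N))

include ginv hginv hlc_one hlc_vec hlc_mul in
/-- the number operator identity for an orthonormal basis -/
lemma num_op {n : ℕ} (b : OrthonormalBasis (Fin n) ℝ X) {q : ℕ} {M : ExteriorAlgebra ℝ X}
    (hM : M ∈ ⋀[ℝ]^q X) :
    ∑ i, ι ℝ (b i) * lc (b i) M = (q : ℝ) • M := by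
  induction hM using Submodule.pow_induction_on_left' with
  | algebraMap r =>
    simp [lc_algebraMap lc hlc_one]
  | add x y i hx hy ihx ihy =>
    simp only [map_add, mul_add, Finset.sum_add_distrib, ihx, ihy, smul_add]
  | mem_mul m hm i x hx ih =>
    obtain ⟨v, rfl⟩ := hm
    have key : ∀ j, ι ℝ (b j) * lc (b j) (ι ℝ v * x)
        = ⟪b j, v⟫ • (ι ℝ (b j) * x) + ι ℝ v * (ι ℝ (b j) * lc (b j) x) := by
      intro j
      rw [lc_iota_mul ginv hginv lc hlc_vec hlc_mul, mul_sub, mul_smul_comm, ← mul_assoc,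
        iota_swap (b j) v, neg_mul, mul_assoc, sub_eq_add_neg, neg_neg]
    calc ∑ j, ι ℝ (b j) * lc (b j) (ι ℝ v * x)
        = (∑ j, ⟪b j, v⟫ • (ι ℝ (b j) * x)) + ι ℝ v * ∑ j, ι ℝ (b j) * lc (b j) x := by
          rw [Finset.sum_congr rfl fun j _ => key j, Finset.sum_add_distrib, ← Finset.mul_sum]
      _ = ι ℝ v * x + ι ℝ v * ((i:ℝ) • x) := by
          rw [ih]
          congr 1
          have : ∑ j, ⟪b j, v⟫ • (ι ℝ (b j) * x) = (∑ j, ⟪b j, v⟫ • ι ℝ (b j)) * x := by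
            rw [Finset.sum_mul]
            exact Finset.sum_congr rfl fun j _ => (smul_mul_assoc _ _ _).symm
          have h2 : (∑ j, ⟪b j, v⟫ • ι ℝ (b j)) = ι ℝ (∑ j, ⟪b j, v⟫ • b j) := by
            simp [map_sum, map_smul]
          rw [this, h2, b.sum_repr' v]
      _ = ((i.succ : ℕ) : ℝ) • (ι ℝ v * x) := by
          rw [mul_smul_comm]
          push_cast
          rw [add_smul, one_smul, add_comm]

include ginv hginv hlc_one hlc_vec hlc_mul hLC_one hLC_vec hLC_mul in
/-- nondegeneracy of the contraction pairing -/
lemma LC_nondeg : ∀ (q : ℕ) (N : ExteriorAlgebra ℝ X), N ∈ ⋀[ℝ]^q X →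
    (∀ F ∈ ⋀[ℝ]^q X, LC F N = 0) → N = 0 := by
  intro q
  induction q with
  | zero =>
    intro N hN hF
    have := hF 1 one_mem_grade_zero
    rwa [hLC_one] at this
  | succ q ih =>
    intro N hN hF
    have hv : ∀ v : X, lc v N = 0 := by
      intro v
      refine ih (lc v N) ?_ ?_
      · have := lc_grade ginv hginv lc hlc_one hlc_vec hlc_mul v hN
        simpa using this
      · intro F hFq
        rw [← hLC_mul]
        exact hF _ (iota_mul_mem_grade hFq)
    have hnum := num_op ginv hginv lc hlc_one hlc_vec hlc_mul
      (stdOrthonormalBasis ℝ X) hN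
    simp only [hv, mul_zero, Finset.sum_const_zero] at hnum
    have : ((q+1 : ℕ) : ℝ) ≠ 0 := by positivity
    rcases smul_eq_zero.mp hnum.symm with h | h
    · exact absurd h this
    · exact h
end


section
variable {X : Type*} [NormedAddCommGroup X] [InnerProductSpace ℝ X]
    [FiniteDimensional ℝ X]
    (ginv : ExteriorAlgebra ℝ X →ₐ[ℝ] ExteriorAlgebra ℝ X)
    (hginv : ∀ v : X, ginv (ExteriorAlgebra.ι ℝ v) = - ExteriorAlgebra.ι ℝ v)
    (lc : X → ExteriorAlgebra ℝ X →ₗ[ℝ] ExteriorAlgebra ℝ X)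
    (hlc_one : ∀ v : X, lc v 1 = 0)
    (hlc_vec : ∀ v w : X, lc v (ExteriorAlgebra.ι ℝ w) = algebraMap ℝ (ExteriorAlgebra ℝ X) ⟪v, w⟫)
    (hlc_mul : ∀ (v : X) (M N : ExteriorAlgebra ℝ X),
      lc v (M * N) = lc v M * N + ginv M * lc v N)
    (LC : ExteriorAlgebra ℝ X →ₗ[ℝ] ExteriorAlgebra ℝ X →ₗ[ℝ] ExteriorAlgebra ℝ X)
    (hLC_one : ∀ N : ExteriorAlgebra ℝ X, LC 1 N = N)
    (hLC_vec : ∀ (v : X) (N : ExteriorAlgebra ℝ X), LC (ExteriorAlgebra.ι ℝ v) N = lc v N)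
    (hLC_mul : ∀ (v : X) (M N : ExteriorAlgebra ℝ X),
      LC (ExteriorAlgebra.ι ℝ v * M) N = LC M (lc v N))

lemma prod_map_mem_grade : ∀ l : List X, (l.map (ι ℝ)).prod ∈ ⋀[ℝ]^(l.length) X
  | [] => one_mem_grade_zero
  | a :: t => by
    rw [List.map_cons, List.prod_cons, List.length_cons]
    exact iota_mul_mem_grade (prod_map_mem_grade t)

include ginv hginv hlc_one hlc_vec hlc_mul in
lemma lc_ortho_prod (u : X) : ∀ l : List X, (∀ w ∈ l, ⟪u, w⟫ = 0) →
    lc u ((l.map (ι ℝ)).prod) = 0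
  | [], _ => hlc_one u
  | a :: t, h => by
    rw [List.map_cons, List.prod_cons, lc_iota_mul ginv hginv lc hlc_vec hlc_mul,
      h a List.mem_cons_self, zero_smul,
      lc_ortho_prod u t (fun w hw => h w (List.mem_cons_of_mem a hw)), mul_zero, zero_sub,
      neg_zero]

include hginv in
lemma ginv_prod : ∀ l : List X,
    ginv ((l.map (ι ℝ)).prod) = ((-1:ℝ))^l.length • (l.map (ι ℝ)).prod
  | [] => by simp
  | a :: t => by
    rw [List.map_cons, List.prod_cons, map_mul, hginv, ginv_prod t, List.length_cons,
      neg_mul, mul_smul_comm, pow_succ, mul_comm (((-1:ℝ))^t.length) (-1),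
      mul_smul, neg_one_smul]

lemma comm_prod (u : X) (l : List X) :
    ι ℝ u * (l.map (ι ℝ)).prod = ((-1:ℝ))^l.length • ((l.map (ι ℝ)).prod * ι ℝ u) :=
  comm_grade u (prod_map_mem_grade l)

-- a vector in the span of the blade's factors kills the blade
lemma iota_span_mul_blade {k : ℕ} (v : Fin k → X) {y : X}
    (hy : y ∈ Submodule.span ℝ (Set.range v)) : ι ℝ y * expBlade v = 0 := by
  induction hy using Submodule.span_induction with
  | mem x hx =>
    obtain ⟨i, rfl⟩ := hx
    exact ι_mul_prod_list v i
  | zero => simp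
  | add x y hx hy ihx ihy => rw [map_add, add_mul, ihx, ihy, add_zero]
  | smul a x hx ihx => rw [map_smul, smul_mul_assoc, ihx, smul_zero]

include ginv hginv hlc_one hlc_vec hlc_mul hLC_one hLC_vec hLC_mul in
/-- forward direction core: any contraction of a blade by a `(p-1)`-vector,
multiplied by the blade, vanishes -/
lemma forward_core {p : ℕ} (hp : 1 ≤ p) (v : Fin p → X)
    (hH : expBlade v ∈ ⋀[ℝ]^p X) {F : ExteriorAlgebra ℝ X} (hF : F ∈ ⋀[ℝ]^(p-1) X) :
    LC F (expBlade v) * expBlade v = 0 := by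
  set H := expBlade v with hHdef
  set Y : Submodule ℝ X := Submodule.span ℝ (Set.range v) with hY
  set P : Subalgebra ℝ (ExteriorAlgebra ℝ X) := Algebra.adjoin ℝ ((ι ℝ) '' (Y : Set X)) with hP
  -- grade involution preserves P
  have ginvP : ∀ M ∈ P, ginv M ∈ P := by
    intro M hM
    induction hM using Algebra.adjoin_induction with
    | mem x hx =>
      obtain ⟨y, hy, rfl⟩ := hx
      rw [hginv]
      exact neg_mem (Algebra.subset_adjoin ⟨y, hy, rfl⟩)
    | algebraMap r => rw [AlgHom.commutes]; exact algebraMap_mem _ r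
    | add x y hx hy ihx ihy => rw [map_add]; exact add_mem ihx ihy
    | mul x y hx hy ihx ihy => rw [map_mul]; exact mul_mem ihx ihy
  -- contraction by any vector preserves P
  have lcP : ∀ (w : X), ∀ M ∈ P, lc w M ∈ P := by
    intro w M hM
    have : M ∈ P ∧ lc w M ∈ P := by
      induction hM using Algebra.adjoin_induction with
      | mem x hx =>
        obtain ⟨y, hy, rfl⟩ := hx
        refine ⟨Algebra.subset_adjoin ⟨y, hy, rfl⟩, ?_⟩
        rw [hlc_vec]
        exact algebraMap_mem _ _
      | algebraMap r =>
        exact ⟨algebraMap_mem _ r, by rw [lc_algebraMap lc hlc_one]; exact zero_mem _⟩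
      | add x y hx hy ihx ihy =>
        exact ⟨add_mem ihx.1 ihy.1, by rw [map_add]; exact add_mem ihx.2 ihy.2⟩
      | mul x y hx hy ihx ihy =>
        refine ⟨mul_mem ihx.1 ihy.1, ?_⟩
        rw [hlc_mul]
        exact add_mem (mul_mem ihx.2 ihy.1) (mul_mem (ginvP x ihx.1) ihy.2)
    exact this.2
  -- LC by anything preserves P
  have LCP : ∀ (G : ExteriorAlgebra ℝ X), ∀ M ∈ P, LC G M ∈ P := by
    intro G
    induction G using ExteriorAlgebra.induction with
    | algebraMap r =>
      intro M hM
      rw [LC_algebraMap LC hLC_one]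
      exact SMulMemClass.smul_mem r hM
    | ι x => intro M hM; rw [hLC_vec]; exact lcP x M hM
    | mul a b iha ihb =>
      intro M hM
      rw [LC_mul_assoc lc LC hLC_one hLC_vec hLC_mul]
      exact ihb _ (iha M hM)
    | add a b iha ihb =>
      intro M hM
      rw [map_add, LinearMap.add_apply]
      exact add_mem (iha M hM) (ihb M hM)
  -- H is in P
  have hHP : H ∈ P := by
    rw [hHdef]
    refine Submonoid.list_prod_mem _ ?_
    intro x hx
    rw [List.mem_ofFn] at hx
    obtain ⟨i, rfl⟩ := hx
    exact Algebra.subset_adjoin ⟨v i, Submodule.subset_span ⟨i, rfl⟩, rfl⟩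
  -- elements of P of degree one are ι of elements of Y
  have deg_one : ∀ M ∈ P, M ∈ ⋀[ℝ]^1 X → ∃ y ∈ Y, M = ι ℝ y := by
    intro M hMP hM1
    -- the two algebra maps
    set Ψ : ExteriorAlgebra ℝ Y →ₐ[ℝ] ExteriorAlgebra ℝ X :=
      ExteriorAlgebra.lift ℝ ⟨(ι ℝ).comp Y.subtype, fun y => ι_sq_zero _⟩ with hΨ
    set Φ : ExteriorAlgebra ℝ X →ₐ[ℝ] ExteriorAlgebra ℝ Y :=
      ExteriorAlgebra.lift ℝ ⟨(ι ℝ).comp (Y.orthogonalProjectionOnto).toLinearMap,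
        fun x => ι_sq_zero _⟩ with hΦ
    have hΨι : ∀ y : Y, Ψ (ι ℝ y) = ι ℝ (y : X) := fun y => by
      rw [hΨ, ExteriorAlgebra.lift_ι_apply]; rfl
    have hΦι : ∀ x : X, Φ (ι ℝ x) = ι ℝ (Y.orthogonalProjectionOnto x) := fun x => by
      rw [hΦ, ExteriorAlgebra.lift_ι_apply]; rfl
    have hretr : ∀ N, Φ (Ψ N) = N := by
      have : Φ.comp Ψ = AlgHom.id ℝ (ExteriorAlgebra ℝ Y) := by
        apply ExteriorAlgebra.hom_ext
        ext y
        simp only [AlgHom.comp_toLinearMap, LinearMap.coe_comp, Function.comp_apply,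
          AlgHom.toLinearMap_apply, AlgHom.id_apply, AlgHom.toLinearMap_id, LinearMap.id_comp]
        rw [hΨι, hΦι, Submodule.orthogonalProjectionOnto_mem_subspace_eq_self]
      intro N
      calc Φ (Ψ N) = (Φ.comp Ψ) N := rfl
      _ = N := by rw [this]; rfl
    have hPrange : (P : Set (ExteriorAlgebra ℝ X)) ⊆ Ψ.range := by
      rw [hP]
      apply Algebra.adjoin_le
      rintro x ⟨y, hy, rfl⟩
      exact ⟨ι ℝ (⟨y, hy⟩ : Y), hΨι _⟩
    obtain ⟨N, hN⟩ := (AlgHom.mem_range Ψ).mp (hPrange hMP)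
    -- M has degree 1 : M = ι u
    have hM1' : M ∈ LinearMap.range (ι ℝ (M := X)) := by
      have : M ∈ (LinearMap.range (ι ℝ (M := X)))^1 := hM1
      rwa [pow_one] at this
    obtain ⟨u, hu⟩ := hM1'
    refine ⟨(Y.orthogonalProjectionOnto u : Y), SetLike.coe_mem _, ?_⟩
    have : M = Ψ (Φ M) := by rw [← hN, hretr]
    rw [this, ← hu, hΦι, hΨι]
  -- now finish
  have hLCF : LC F H ∈ ⋀[ℝ]^1 X := by
    have := LC_grade ginv hginv lc hlc_one hlc_vec hlc_mul LC hLC_one hLC_vec hLC_mul hF hH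
    have harith : p - (p - 1) = 1 := by omega
    rwa [harith] at this
  obtain ⟨y, hy, hyeq⟩ := deg_one _ (LCP F H hHP) hLCF
  rw [hyeq, hHdef]
  exact iota_span_mul_blade v hy
end

section
variable {X : Type*} [NormedAddCommGroup X] [InnerProductSpace ℝ X]
    [FiniteDimensional ℝ X]
    (ginv : ExteriorAlgebra ℝ X →ₐ[ℝ] ExteriorAlgebra ℝ X)
    (hginv : ∀ v : X, ginv (ExteriorAlgebra.ι ℝ v) = - ExteriorAlgebra.ι ℝ v)
    (lc : X → ExteriorAlgebra ℝ X →ₗ[ℝ] ExteriorAlgebra ℝ X)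
    (hlc_one : ∀ v : X, lc v 1 = 0)
    (hlc_vec : ∀ v w : X, lc v (ExteriorAlgebra.ι ℝ w) = algebraMap ℝ (ExteriorAlgebra ℝ X) ⟪v, w⟫)
    (hlc_mul : ∀ (v : X) (M N : ExteriorAlgebra ℝ X),
      lc v (M * N) = lc v M * N + ginv M * lc v N)

lemma grade_split {k : ℕ} {B G H : ExteriorAlgebra ℝ X} (hB : B ∈ ⋀[ℝ]^k X)
    (hH : H ∈ ⋀[ℝ]^k X) (hEq : H = B * G) : ∃ r : ℝ, H = r • B := by
  classical
  set ℳ : ℕ → Submodule ℝ (ExteriorAlgebra ℝ X) := fun i => ⋀[ℝ]^i X with hℳ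
  set πₗ : ExteriorAlgebra ℝ X →ₗ[ℝ] ExteriorAlgebra ℝ X :=
    (ℳ k).subtype ∘ₗ (DFinsupp.lapply k) ∘ₗ (DirectSum.decomposeAlgEquiv ℳ).toLinearMap
    with hπ
  have hπ_apply : ∀ x, πₗ x = ↑(DirectSum.decompose ℳ x k) := fun x => rfl
  have hπH : πₗ H = H := by rw [hπ_apply, DirectSum.decompose_of_mem_same ℳ hH]
  have hGsum : G = ∑ i ∈ (DirectSum.decompose ℳ G).support, ↑(DirectSum.decompose ℳ G i) :=
    (DirectSum.sum_support_decompose ℳ G).symm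
  have hkey : H = B * ↑(DirectSum.decompose ℳ G 0) := by
    conv_lhs => rw [← hπH, hEq]
    conv_lhs => rw [hGsum, Finset.mul_sum, map_sum]
    have hterm : ∀ i ∈ (DirectSum.decompose ℳ G).support,
        πₗ (B * ↑(DirectSum.decompose ℳ G i)) =
          if i = 0 then B * ↑(DirectSum.decompose ℳ G 0) else 0 := by
      intro i _
      have hmem : B * ↑(DirectSum.decompose ℳ G i) ∈ ℳ (k + i) :=
        SetLike.mul_mem_graded hB (SetLike.coe_mem _)
      by_cases hi : i = 0
      · subst hi
        rw [if_pos rfl, hπ_apply]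
        rw [DirectSum.decompose_of_mem_same ℳ (by simpa using hmem)]
      · rw [if_neg hi, hπ_apply, DirectSum.decompose_of_mem_ne ℳ hmem (by omega)]
    rw [Finset.sum_congr rfl hterm, Finset.sum_ite_eq' _ 0 fun _ =>
      B * ↑(DirectSum.decompose ℳ G 0)]
    by_cases h0 : (0 : ℕ) ∈ (DirectSum.decompose ℳ G).support
    · rw [if_pos h0]
    · rw [if_neg h0]
      have : DirectSum.decompose ℳ G 0 = 0 := DFinsupp.notMem_support_iff.mp h0
      rw [this, ZeroMemClass.coe_zero, mul_zero]
  obtain ⟨r, hr⟩ := mem_grade_zero (SetLike.coe_mem (DirectSum.decompose ℳ G 0))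
  exact ⟨r, by rw [hkey, ← hr, ← Algebra.commutes, ← Algebra.smul_def]⟩

include ginv hginv hlc_one hlc_vec hlc_mul in
lemma div_chain {m : ℕ} (c : Fin m → X) (hON : Orthonormal ℝ c)
    (H : ExteriorAlgebra ℝ X) (hann : ∀ i, ι ℝ (c i) * H = 0) :
    ∃ G, H = ((List.ofFn c).map (ι ℝ)).prod * G := by
  suffices h : ∀ j, j ≤ m → ∃ G, H = (((List.ofFn c).take j).map (ι ℝ)).prod * G by
    obtain ⟨G, hG⟩ := h m le_rfl
    exact ⟨G, by simpa [List.take_of_length_le, List.length_ofFn] using hG⟩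
  intro j
  induction j with
  | zero => exact fun _ => ⟨H, by simp⟩
  | succ j ih =>
    intro hjm
    obtain ⟨G, hG⟩ := ih (Nat.le_of_succ_le hjm)
    have hjm' : j < m := hjm
    set L : List X := (List.ofFn c).take j with hL
    set u : X := c ⟨j, hjm'⟩ with hu
    have hlen : L.length = j := by
      rw [hL, List.length_take, List.length_ofFn]; omega
    have hmem : ∀ w ∈ L, ⟪u, w⟫ = 0 := by
      intro w hw
      rw [List.mem_iff_getElem] at hw
      obtain ⟨a, ha, rfl⟩ := hw
      rw [hlen] at ha
      have ham : a < m := lt_of_lt_of_le ha (Nat.le_of_succ_le hjm)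
      have hget : L[a] = c ⟨a, ham⟩ := by
        simp [hL, List.getElem_take, List.getElem_ofFn]
      rw [hget]
      exact hON.2 (by simp [Fin.ext_iff]; omega)
    have h0 : ι ℝ u * H = 0 := hann _
    have huu : ⟪u, u⟫ = 1 := by
      have := hON.1 ⟨j, hjm'⟩
      rw [hu, real_inner_self_eq_norm_sq, this, one_pow]
    have hH2 : H = ι ℝ u * lc u H := by
      have h3 := lc_iota_mul ginv hginv lc hlc_vec hlc_mul u u H
      rw [h0, map_zero, huu, one_smul] at h3
      exact sub_eq_zero.mp h3.symm
    have hlcL : lc u ((L.map (ι ℝ)).prod) = 0 :=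
      lc_ortho_prod ginv hginv lc hlc_one hlc_vec hlc_mul u L hmem
    have hlcH : lc u H = ((-1:ℝ))^j • ((L.map (ι ℝ)).prod * lc u G) := by
      rw [hG, hlc_mul, hlcL, zero_mul, zero_add,
        ginv_prod ginv hginv, hlen, smul_mul_assoc]
    refine ⟨lc u G, ?_⟩
    have htake : (List.ofFn c).take (j+1) = L ++ [u] := by
      rw [hL, hu, List.take_succ]
      congr 1
      have : (List.ofFn c)[j]? = some (c ⟨j, hjm'⟩) := by
        rw [List.getElem?_eq_getElem (by simpa using hjm')]
        simp
      rw [this]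
      rfl
    rw [htake, List.map_append, List.prod_append]
    calc H = ι ℝ u * lc u H := hH2
    _ = ((-1:ℝ))^j • (ι ℝ u * ((L.map (ι ℝ)).prod * lc u G)) := by
        rw [hlcH, mul_smul_comm]
    _ = ((-1:ℝ))^j • ((ι ℝ u * (L.map (ι ℝ)).prod) * lc u G) := by rw [mul_assoc]
    _ = ((-1:ℝ))^j • (((-1:ℝ))^j • ((L.map (ι ℝ)).prod * ι ℝ u) * lc u G) := by
        rw [comm_prod, hlen]
    _ = (((-1:ℝ))^j * ((-1:ℝ))^j) • ((L.map (ι ℝ)).prod * ι ℝ u * lc u G) := by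
        rw [smul_mul_assoc, smul_smul]
    _ = (L.map (ι ℝ)).prod * ι ℝ u * lc u G := by
        rw [← pow_add, Even.neg_one_pow ⟨j, rfl⟩, one_smul]
    _ = ((L.map (ι ℝ)).prod * ([u].map (ι ℝ)).prod) * lc u G := by
        simp [mul_assoc]
end

lemma blade_smul' {X : Type*} [NormedAddCommGroup X] [InnerProductSpace ℝ X]
    {p : ℕ} (hp : 1 ≤ p) (v : Fin p → X) (r : ℝ) :
    expBlade (fun i => if (i:ℕ) = 0 then r • v i else v i) = r • expBlade v := by
  obtain ⟨q, rfl⟩ : ∃ q, p = q + 1 := ⟨p - 1, by omega⟩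
  have hfun : (fun i : Fin q =>
      ExteriorAlgebra.ι ℝ (if ((i.succ : Fin (q+1)) : ℕ) = 0 then r • v i.succ else v i.succ))
      = fun i : Fin q => ExteriorAlgebra.ι ℝ (v i.succ) := by
    funext i
    rw [if_neg (by simp)]
  rw [expBlade, expBlade, List.ofFn_succ, List.ofFn_succ, List.prod_cons, List.prod_cons]
  have h0 : (if ((0 : Fin (q+1)) : ℕ) = 0 then r • v 0 else v 0) = r • v 0 := if_pos rfl
  rw [h0, map_smul, smul_mul_assoc, hfun]

section
variable {X : Type*} [NormedAddCommGroup X] [InnerProductSpace ℝ X]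
    [FiniteDimensional ℝ X]
    (ginv : ExteriorAlgebra ℝ X →ₐ[ℝ] ExteriorAlgebra ℝ X)
    (hginv : ∀ v : X, ginv (ExteriorAlgebra.ι ℝ v) = - ExteriorAlgebra.ι ℝ v)
    (lc : X → ExteriorAlgebra ℝ X →ₗ[ℝ] ExteriorAlgebra ℝ X)
    (hlc_one : ∀ v : X, lc v 1 = 0)
    (hlc_vec : ∀ v w : X, lc v (ExteriorAlgebra.ι ℝ w) = algebraMap ℝ (ExteriorAlgebra ℝ X) ⟪v, w⟫)
    (hlc_mul : ∀ (v : X) (M N : ExteriorAlgebra ℝ X),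
      lc v (M * N) = lc v M * N + ginv M * lc v N)
    (LC : ExteriorAlgebra ℝ X →ₗ[ℝ] ExteriorAlgebra ℝ X →ₗ[ℝ] ExteriorAlgebra ℝ X)
    (hLC_one : ∀ N : ExteriorAlgebra ℝ X, LC 1 N = N)
    (hLC_vec : ∀ (v : X) (N : ExteriorAlgebra ℝ X), LC (ExteriorAlgebra.ι ℝ v) N = lc v N)
    (hLC_mul : ∀ (v : X) (M N : ExteriorAlgebra ℝ X),
      LC (ExteriorAlgebra.ι ℝ v * M) N = LC M (lc v N))

include ginv hginv hlc_one hlc_vec hlc_mul hLC_one hLC_vec hLC_mul in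
set_option maxHeartbeats 1000000 in
lemma backward_core {p : ℕ} (hp : 1 ≤ p) (H : ExteriorAlgebra ℝ X) (hH : H ∈ ⋀[ℝ]^p X)
    (hne : H ≠ 0) (hyp : ∀ F ∈ ⋀[ℝ]^(p-1) X, LC F H * H = 0) :
    ∃ v : Fin p → X, H = expBlade v := by
  classical
  set S : Set X := {u | ∃ F, F ∈ ⋀[ℝ]^(p-1) X ∧ LC F H = ι ℝ u} with hS
  set W : Submodule ℝ X := Submodule.span ℝ S with hW
  -- Step 1 : vectors of W annihilate H
  have step1 : ∀ u ∈ W, ι ℝ u * H = 0 := by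
    intro u hu
    induction hu using Submodule.span_induction with
    | mem x hx => obtain ⟨F, hF, hFx⟩ := hx; rw [← hFx]; exact hyp F hF
    | zero => rw [map_zero, zero_mul]
    | add x y hx hy ihx ihy => rw [map_add, add_mul, ihx, ihy, add_zero]
    | smul a x hx ihx => rw [map_smul, smul_mul_assoc, ihx, smul_zero]
  -- Step 2 : contraction by vectors of Wᗮ kills H
  have step2 : ∀ u ∈ Wᗮ, lc u H = 0 := by
    intro u hu
    refine LC_nondeg ginv hginv lc hlc_one hlc_vec hlc_mul LC hLC_one hLC_vec hLC_mul
      (p-1) _ ?_ ?_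
    · exact lc_grade ginv hginv lc hlc_one hlc_vec hlc_mul u hH
    · intro F hF
      have hLCF : LC F H ∈ ⋀[ℝ]^1 X := by
        have := LC_grade ginv hginv lc hlc_one hlc_vec hlc_mul LC hLC_one hLC_vec hLC_mul
          hF hH
        rwa [show p - (p-1) = 1 by omega] at this
      have hLCF' : LC F H ∈ LinearMap.range (ι ℝ (M := X)) := by
        have h1 : LC F H ∈ (LinearMap.range (ι ℝ (M := X)))^1 := hLCF
        rwa [pow_one] at h1
      obtain ⟨w, hw⟩ := hLCF'
      have hwS : w ∈ S := ⟨F, hF, hw.symm⟩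
      have hperp : ⟪u, w⟫ = 0 := by
        have := (Submodule.mem_orthogonal W u).mp hu w (Submodule.subset_span hwS)
        rwa [real_inner_comm] at this
      have h1 : LC F (lc u H) = LC (ι ℝ u * F) H := (hLC_mul u F H).symm
      rw [h1, comm_grade u hF, map_smul, LinearMap.smul_apply,
        LC_mul_assoc lc LC hLC_one hLC_vec hLC_mul, hLC_vec, ← hw, hlc_vec, hperp,
        map_zero, smul_zero]
  -- an orthonormal basis of W, viewed in X
  obtain ⟨m, c, hON, hcW, hWspan, hmn⟩ :
      ∃ (m : ℕ) (c : Fin m → X), Orthonormal ℝ c ∧ (∀ i, c i ∈ W) ∧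
        W = Submodule.span ℝ (Set.range c) ∧ m ≤ Module.finrank ℝ X := by
    refine ⟨Module.finrank ℝ W, fun i => ((stdOrthonormalBasis ℝ W) i : X), ?_, ?_, ?_, ?_⟩
    · constructor
      · intro i
        exact (stdOrthonormalBasis ℝ W).orthonormal.1 i
      · intro i j hij
        exact (stdOrthonormalBasis ℝ W).orthonormal.2 hij
    · exact fun i => SetLike.coe_mem _
    · have h1 : Set.range (fun i => ((stdOrthonormalBasis ℝ W) i : X))
          = W.subtype '' Set.range (stdOrthonormalBasis ℝ W) := by
        rw [← Set.range_comp]; rfl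
      rw [h1, Submodule.span_image, ← (stdOrthonormalBasis ℝ W).coe_toBasis,
        Module.Basis.span_eq, Submodule.map_subtype_top]
    · exact Submodule.finrank_le W
  -- extend to an orthonormal basis of X
  set v0 : Fin (Module.finrank ℝ X) → X := fun i => if h : (i : ℕ) < m then c ⟨i, h⟩ else 0 with hv0
  have hv0on : Orthonormal ℝ (Set.restrict {i : Fin (Module.finrank ℝ X) | (i:ℕ) < m} v0) := by
    have hrestr : (Set.restrict {i : Fin (Module.finrank ℝ X) | (i:ℕ) < m} v0)
        = c ∘ (fun i : {i : Fin (Module.finrank ℝ X) | (i:ℕ) < m} => (⟨((i : Fin (Module.finrank ℝ X)) : ℕ), by exact i.2⟩ : Fin m)) := by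
      funext i
      exact dif_pos i.2
    rw [hrestr]
    refine hON.comp _ ?_
    intro i j hij
    simp only [Fin.mk.injEq] at hij
    exact Subtype.ext (Fin.ext hij)
  obtain ⟨b, hb⟩ := Orthonormal.exists_orthonormalBasis_extension_of_card_eq (𝕜 := ℝ)
    (by simp) hv0on
  have hbi : ∀ (i : Fin (Module.finrank ℝ X)) (h : (i:ℕ) < m), b i = c ⟨i, h⟩ := by
    intro i h
    rw [hb i h]
    simp only [hv0]
    rw [dif_pos h]
  -- basis vectors outside W are in Wᗮ
  have hbot : ∀ (i : Fin (Module.finrank ℝ X)), ¬((i:ℕ) < m) → b i ∈ Wᗮ := by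
    intro i hi
    rw [Submodule.mem_orthogonal]
    intro x hx
    rw [hWspan] at hx
    induction hx using Submodule.span_induction with
    | mem y hy =>
      obtain ⟨j, rfl⟩ := hy
      have hj : ((Fin.castLE hmn j : Fin (Module.finrank ℝ X)) : ℕ) < m := by simpa using j.2
      have hcj : b (Fin.castLE hmn j) = c j :=
        (hbi _ hj).trans (congrArg c (Fin.ext rfl))
      rw [← hcj]
      refine b.orthonormal.2 ?_
      simp only [ne_eq, Fin.ext_iff, Fin.coe_castLE]
      omega
    | zero => rw [inner_zero_left]
    | add x y hx hy ihx ihy => rw [inner_add_left, ihx, ihy, add_zero]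
    | smul a x hx ihx => rw [real_inner_smul_left, ihx, mul_zero]
  have hlcbot : ∀ (i : Fin (Module.finrank ℝ X)), ¬((i:ℕ) < m) → lc (b i) H = 0 :=
    fun i hi => step2 _ (hbot i hi)
  -- basis vectors in W reproduce H
  have htop : ∀ (i : Fin (Module.finrank ℝ X)), (i:ℕ) < m → ι ℝ (b i) * lc (b i) H = H := by
    intro i h
    have h0 : ι ℝ (b i) * H = 0 := step1 _ (by rw [hbi i h]; exact hcW _)
    have huu : ⟪b i, b i⟫ = 1 := by
      rw [real_inner_self_eq_norm_sq, b.orthonormal.1 i, one_pow]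
    have h3 := lc_iota_mul ginv hginv lc hlc_vec hlc_mul (b i) (b i) H
    rw [h0, map_zero, huu, one_smul] at h3
    exact (sub_eq_zero.mp h3.symm).symm
  -- the number operator evaluates to both m and p
  have hsum := num_op ginv hginv lc hlc_one hlc_vec hlc_mul b hH
  have hterm : ∀ i : Fin (Module.finrank ℝ X), ι ℝ (b i) * lc (b i) H = if (i:ℕ) < m then H else 0 := by
    intro i
    by_cases h : (i:ℕ) < m
    · rw [if_pos h, htop i h]
    · rw [if_neg h, hlcbot i h, mul_zero]
  rw [Finset.sum_congr rfl (fun i _ => hterm i), Finset.sum_ite, Finset.sum_const,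
    Finset.sum_const_zero, add_zero] at hsum
  have hcard : (Finset.univ.filter (fun i : Fin (Module.finrank ℝ X) => (i:ℕ) < m)).card = m := by
    have hfe : Finset.univ.filter (fun i : Fin (Module.finrank ℝ X) => (i:ℕ) < m)
        = Finset.map (Fin.castLEEmb hmn) Finset.univ := by
      ext i
      simp only [Finset.mem_filter, Finset.mem_univ, true_and, Finset.mem_map,
        Fin.castLEEmb_apply]
      constructor
      · intro h; exact ⟨⟨(i:ℕ), h⟩, by simp [Fin.ext_iff]⟩
      · rintro ⟨j, rfl⟩; simpa using j.2
    rw [hfe, Finset.card_map, Finset.card_univ, Fintype.card_fin]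
  rw [hcard] at hsum
  have hmp : m = p := by
    have h1 : ((m:ℝ)) • H = ((p:ℝ)) • H := by
      rw [Nat.cast_smul_eq_nsmul]; exact hsum
    have h2 : ((m:ℝ) - (p:ℝ)) • H = 0 := by rw [sub_smul, h1, sub_self]
    rcases smul_eq_zero.mp h2 with h | h
    · have : (m:ℝ) = (p:ℝ) := by linarith [sub_eq_zero.mp h]
      exact_mod_cast this
    · exact absurd h hne
  -- divisibility chain
  subst hmp
  have hannc : ∀ i, ι ℝ (c i) * H = 0 := fun i => step1 _ (hcW i)
  obtain ⟨G, hG⟩ := div_chain ginv hginv lc hlc_one hlc_vec hlc_mul c hON H hannc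
  have hBgrade := prod_map_mem_grade (X := X) (List.ofFn c)
  rw [List.length_ofFn] at hBgrade
  obtain ⟨r, hr⟩ := grade_split hBgrade hH hG
  refine ⟨fun i => if (i:ℕ) = 0 then r • c i else c i, ?_⟩
  rw [blade_smul' hp c r, hr]
  congr 1
  rw [expBlade, List.map_ofFn]
  rfl
end


/-- a homogeneous `p`-vector `H` (`p ≥ 1`) is a blade iff `(F⌟H)∧H = 0` for
every `(p−1)`-vector `F`. -/
theorem stmt18 {X : Type*} [NormedAddCommGroup X] [InnerProductSpace ℝ X]
    [FiniteDimensional ℝ X]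
    -- the grade involution: the unique algebra automorphism with `v̂ = -v` on vectors
    (ginv : ExteriorAlgebra ℝ X →ₐ[ℝ] ExteriorAlgebra ℝ X)
    (hginv : ∀ v : X, ginv (ExteriorAlgebra.ι ℝ v) = - ExteriorAlgebra.ι ℝ v)
    -- the left contraction by a vector, characterized by its defining properties
    (lc : X → ExteriorAlgebra ℝ X →ₗ[ℝ] ExteriorAlgebra ℝ X)
    (hlc_one : ∀ v : X, lc v 1 = 0)
    (hlc_vec : ∀ v w : X, lc v (ExteriorAlgebra.ι ℝ w) = algebraMap ℝ (ExteriorAlgebra ℝ X) ⟪v, w⟫)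
    (hlc_mul : ∀ (v : X) (M N : ExteriorAlgebra ℝ X),
      lc v (M * N) = lc v M * N + ginv M * lc v N)
    -- the left contraction `LC M N = M ⌟ N`, extended (bi)linearly in the contractor `M`
    (LC : ExteriorAlgebra ℝ X →ₗ[ℝ] ExteriorAlgebra ℝ X →ₗ[ℝ] ExteriorAlgebra ℝ X)
    (hLC_one : ∀ N : ExteriorAlgebra ℝ X, LC 1 N = N)
    (hLC_vec : ∀ (v : X) (N : ExteriorAlgebra ℝ X), LC (ExteriorAlgebra.ι ℝ v) N = lc v N)
    (hLC_mul : ∀ (v : X) (M N : ExteriorAlgebra ℝ X),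
      LC (ExteriorAlgebra.ι ℝ v * M) N = LC M (lc v N))
    {p : ℕ} (hp : 1 ≤ p) (H : ExteriorAlgebra ℝ X) (hH : H ∈ ⋀[ℝ]^p X) :
    (H = 0 ∨ ∃ v : Fin p → X, H = expBlade v) ↔
      ∀ F ∈ ⋀[ℝ]^(p - 1) X, LC F H * H = 0 := by
  constructor
  · rintro (rfl | ⟨v, rfl⟩) F hF
    · rw [map_zero, zero_mul]
    · exact forward_core ginv hginv lc hlc_one hlc_vec hlc_mul LC hLC_one hLC_vec hLC_mul
        hp v hH hF
  · intro h
    by_cases hne : H = 0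
    · exact Or.inl hne
    · exact Or.inr (backward_core ginv hginv lc hlc_one hlc_vec hlc_mul LC hLC_one hLC_vec
        hLC_mul hp H hH hne h)
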